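/- With E_{n,q}^{(h,r)}(x) defined by the closed formula, for all real x and n ≥ 0, E_{n,q}^{(h,r)}(x) = \sum_{l=0}^n \binom{n}{l} q^{l x} E_{l,q}^{(h,r)}(0) [x]_q^{n-l}. -/

import Mathlib

noncomputable def qnum (q x : ℝ) : ℝ := (1 - q ^ x) / (1 - q)

/-- The (h,q)-extension of higher-order Euler polynomials, by the finite closed formula. -/
noncomputable def qE (q : ℝ) (h : ℤ) (r n : ℕ) (x : ℝ) : ℝ :=
  (1 + q) ^ r / (1 - q) ^ n *
    ∑ l ∈ Finset.range (n + 1), (n.choose l : ℝ) * (-(q ^ x)) ^ l /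
      ∏ j ∈ Finset.range r, (1 + q ^ (h - r + l + 1 + j))

open Finset in
lemma key_sum (a : ℝ) (n : ℕ) (g : ℕ → ℝ) :
    ∑ l ∈ range (n+1), (n.choose l : ℝ) * a^l * (1-a)^(n-l) *
      ∑ k ∈ range (l+1), (l.choose k : ℝ) * g k
    = ∑ k ∈ range (n+1), (n.choose k : ℝ) * a^k * g k := by
  have swap : ∑ l ∈ range (n+1), ∑ k ∈ range (l+1),
      ((n.choose l : ℝ) * a^l * (1-a)^(n-l) * ((l.choose k : ℝ) * g k))
      = ∑ k ∈ range (n+1), ∑ l ∈ Finset.Ico k (n+1),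
      ((n.choose l : ℝ) * a^l * (1-a)^(n-l) * ((l.choose k : ℝ) * g k)) := by
    rw [← Nat.Ico_zero_eq_range,
      Finset.sum_Ico_Ico_comm 0 (n+1) (fun k l => (n.choose l : ℝ) * a^l * (1-a)^(n-l) * ((l.choose k : ℝ) * g k))]
    simp only [Nat.Ico_zero_eq_range]
  calc ∑ l ∈ range (n+1), (n.choose l : ℝ) * a^l * (1-a)^(n-l) *
        ∑ k ∈ range (l+1), (l.choose k : ℝ) * g k
      = ∑ l ∈ range (n+1), ∑ k ∈ range (l+1),
        ((n.choose l : ℝ) * a^l * (1-a)^(n-l) * ((l.choose k : ℝ) * g k)) := by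
        simp [Finset.mul_sum]
    _ = ∑ k ∈ range (n+1), ∑ l ∈ Finset.Ico k (n+1),
        ((n.choose l : ℝ) * a^l * (1-a)^(n-l) * ((l.choose k : ℝ) * g k)) := swap
    _ = ∑ k ∈ range (n+1), (n.choose k : ℝ) * a^k * g k := by
        apply Finset.sum_congr rfl
        intro k hk
        have hk' : k ≤ n := Nat.lt_succ_iff.mp (Finset.mem_range.mp hk)
        rw [Finset.sum_Ico_eq_sum_range]
        have key : ∀ m ∈ range (n+1-k),
            ((n.choose (k+m) : ℝ) * a^(k+m) * (1-a)^(n-(k+m)) * (((k+m).choose k : ℝ) * g k))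
            = (n.choose k : ℝ) * a^k * g k * (((n-k).choose m : ℝ) * a^m * (1-a)^((n-k)-m)) := by
          intro m hm
          have hm' : m < n + 1 - k := Finset.mem_range.mp hm
          have hkm : k + m ≤ n := by omega
          have hc : (n.choose (k+m) : ℝ) * ((k+m).choose k : ℝ) = (n.choose k : ℝ) * ((n-k).choose m : ℝ) := by
            rw [← Nat.cast_mul, ← Nat.cast_mul, Nat.choose_mul (n := n) (Nat.le_add_right k m),
              Nat.add_sub_cancel_left]
          have he : n - (k+m) = (n-k) - m := by omega
          rw [he, pow_add]
          linear_combination (a^k * a^m * (1-a)^((n-k)-m) * g k) * hc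
        rw [Finset.sum_congr rfl key, ← Finset.mul_sum]
        have hb : ∑ m ∈ range (n+1-k), ((n-k).choose m : ℝ) * a^m * (1-a)^((n-k)-m) = 1 := by
          have hr : n + 1 - k = (n-k) + 1 := by omega
          calc ∑ m ∈ range (n+1-k), ((n-k).choose m : ℝ) * a^m * (1-a)^((n-k)-m)
              = (a + (1-a))^(n-k) := by
                rw [add_pow, hr]
                exact Finset.sum_congr rfl (fun m _ => by ring)
            _ = 1 := by norm_num
        rw [hb, mul_one]

theorem qE_eq_sum_qE_zero (q : ℝ) (hq0 : 0 < q) (hq1 : q < 1) (h : ℤ) (r : ℕ) (hr : 0 < r)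
    (n : ℕ) (x : ℝ) :
    qE q h r n x =
      ∑ l ∈ Finset.range (n + 1),
        (n.choose l : ℝ) * q ^ ((l : ℝ) * x) * qE q h r l 0 * (qnum q x) ^ (n - l) := by
  set a : ℝ := q ^ x with ha
  have hq : (1 : ℝ) - q ≠ 0 := by linarith
  set P : ℕ → ℝ := fun l => ∏ j ∈ Finset.range r, (1 + q ^ (h - r + l + 1 + j)) with hP
  set g : ℕ → ℝ := fun k => (-1 : ℝ)^k / P k with hg
  have hrpow : ∀ l : ℕ, q ^ ((l : ℝ) * x) = a ^ l := by
    intro l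
    rw [mul_comm, Real.rpow_mul hq0.le, ha, Real.rpow_natCast]
  have hzero : ∀ l : ℕ, qE q h r l 0 = (1 + q)^r / (1-q)^l *
      ∑ k ∈ Finset.range (l+1), (l.choose k : ℝ) * g k := by
    intro l
    unfold qE
    congr 1
    apply Finset.sum_congr rfl
    intro k _
    rw [hg]
    simp [Real.rpow_zero, mul_div_assoc, hP]
  calc qE q h r n x
      = (1 + q)^r / (1-q)^n *
          ∑ k ∈ Finset.range (n+1), (n.choose k : ℝ) * a^k * g k := by
        unfold qE
        congr 1
        apply Finset.sum_congr rfl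
        intro k _
        rw [hg, neg_pow]
        simp only [hP, ha]
        ring
    _ = (1 + q)^r / (1-q)^n *
          ∑ l ∈ Finset.range (n+1), (n.choose l : ℝ) * a^l * (1-a)^(n-l) *
            ∑ k ∈ Finset.range (l+1), (l.choose k : ℝ) * g k := by
        rw [key_sum]
    _ = ∑ l ∈ Finset.range (n + 1),
        (n.choose l : ℝ) * q ^ ((l : ℝ) * x) * qE q h r l 0 * (qnum q x) ^ (n - l) := by
        rw [Finset.mul_sum]
        apply Finset.sum_congr rfl
        intro l hl
        have hl' : l ≤ n := Nat.lt_succ_iff.mp (Finset.mem_range.mp hl)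
        rw [hrpow, hzero, qnum]
        have hn : (1-q)^n = (1-q)^l * (1-q)^(n-l) := by
          rw [← pow_add, Nat.add_sub_cancel' hl']
        rw [hn, div_pow]
        field_simp
        ring
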